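/- For β ∈ (0, ∞) and N > 0, let ψ_N(x) = (ln(e + β + |x|))^β for |x| < N and (ln(e + β + N))^β for |x| ≥ N, and let γ = β / ((e + β) ln(e + β)). Then the function x ↦ ψ_N(x) e^{-γx} is nonincreasing on ℝ and x ↦ ψ_N(x) e^{γx} is nondecreasing on ℝ. -/

import Mathlib

open Real Set

/-- The truncated logarithmic weight. -/
noncomputable def psiWeight (β N x : ℝ) : ℝ :=
  if |x| < N then (Real.log (Real.exp 1 + β + |x|)) ^ β
  else (Real.log (Real.exp 1 + β + N)) ^ β

lemma psiWeight_eq_min (β N x : ℝ) :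
    psiWeight β N x = (Real.log (Real.exp 1 + β + min |x| N)) ^ β := by
  unfold psiWeight
  rcases lt_or_ge |x| N with h | h
  · rw [if_pos h, min_eq_left h.le]
  · rw [if_neg (not_lt.mpr h), min_eq_right h]

lemma log_log_key (β : ℝ) (hβ : 0 < β) {a b : ℝ} (ha : 0 ≤ a) (hab : a ≤ b) :
    β * Real.log (Real.log (Real.exp 1 + β + b)) -
      β * Real.log (Real.log (Real.exp 1 + β + a)) ≤
    β / ((Real.exp 1 + β) * Real.log (Real.exp 1 + β)) * (b - a) := by
  have he : (1:ℝ) < Real.exp 1 := by nlinarith [Real.add_one_le_exp (1:ℝ)]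
  set c := Real.exp 1 + β with hc
  have hc1 : Real.exp 1 < c := by simp only [hc]; linarith
  have hc0 : (0:ℝ) < c := by linarith
  have hca : Real.exp 1 < c + a := by linarith
  have hcb : Real.exp 1 < c + b := by linarith
  have hA : 1 < Real.log (c + a) := by
    have := Real.log_lt_log (Real.exp_pos 1) hca
    rwa [Real.log_exp] at this
  have hB : 1 < Real.log (c + b) := by
    have := Real.log_lt_log (Real.exp_pos 1) hcb
    rwa [Real.log_exp] at this
  have hlc : 1 < Real.log c := by
    have := Real.log_lt_log (Real.exp_pos 1) hc1
    rwa [Real.log_exp] at this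
  have hlcA : Real.log c ≤ Real.log (c + a) := by
    apply Real.log_le_log (by linarith)
    linarith
  have hAB : Real.log (c + a) ≤ Real.log (c + b) := by
    apply Real.log_le_log (by linarith)
    linarith
  -- Step 1 : log(c+b) - log(c+a) ≤ (b-a)/c
  have step1 : Real.log (c + b) - Real.log (c + a) ≤ (b - a) / c := by
    rw [← Real.log_div (by linarith) (by linarith)]
    have h1 : Real.log ((c + b) / (c + a)) ≤ (c + b) / (c + a) - 1 :=
      Real.log_le_sub_one_of_pos (div_pos (by linarith) (by linarith))
    have h2 : (c + b) / (c + a) - 1 = (b - a) / (c + a) := by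
      field_simp
      ring
    have h3 : (b - a) / (c + a) ≤ (b - a) / c := by
      gcongr <;> linarith
    linarith
  -- Step 2 : log log (c+b) - log log (c+a) ≤ (log(c+b) - log(c+a)) / log c
  have step2 : Real.log (Real.log (c + b)) - Real.log (Real.log (c + a)) ≤
      (Real.log (c + b) - Real.log (c + a)) / Real.log c := by
    rw [← Real.log_div (by linarith) (by linarith)]
    have h1 : Real.log (Real.log (c + b) / Real.log (c + a)) ≤
        Real.log (c + b) / Real.log (c + a) - 1 :=
      Real.log_le_sub_one_of_pos (div_pos (by linarith) (by linarith))
    have h2 : Real.log (c + b) / Real.log (c + a) - 1 =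
        (Real.log (c + b) - Real.log (c + a)) / Real.log (c + a) := by
      field_simp
    have h3 : (Real.log (c + b) - Real.log (c + a)) / Real.log (c + a) ≤
        (Real.log (c + b) - Real.log (c + a)) / Real.log c := by
      gcongr <;> linarith
    linarith
  have step3 : (Real.log (c + b) - Real.log (c + a)) / Real.log c ≤
      ((b - a) / c) / Real.log c := by
    gcongr <;> linarith
  have hfin : Real.log (Real.log (c + b)) - Real.log (Real.log (c + a)) ≤
      (b - a) / (c * Real.log c) := by
    have : ((b - a) / c) / Real.log c = (b - a) / (c * Real.log c) := by
      rw [div_div]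
    linarith
  have hrw : β / (c * Real.log c) * (b - a) = β * ((b - a) / (c * Real.log c)) := by
    ring
  rw [hrw]
  nlinarith [hfin, hβ]

/-- Lemma 2.10 (third part): with `γ = β / ((e + β) log(e + β))`, the function
`x ↦ ψ_N(x) e^{-γx}` is nonincreasing and `x ↦ ψ_N(x) e^{γx}` is nondecreasing. -/
theorem psiWeight_monotone (β N : ℝ) (hβ : 0 < β) (hN : 0 < N) :
    Antitone (fun x : ℝ => psiWeight β N x *
      Real.exp (-(β / ((Real.exp 1 + β) * Real.log (Real.exp 1 + β))) * x)) ∧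
    Monotone (fun x : ℝ => psiWeight β N x *
      Real.exp ((β / ((Real.exp 1 + β) * Real.log (Real.exp 1 + β))) * x)) := by
  have he : (1:ℝ) < Real.exp 1 := by nlinarith [Real.add_one_le_exp (1:ℝ)]
  set γ := β / ((Real.exp 1 + β) * Real.log (Real.exp 1 + β)) with hγdef
  have hlc : 0 < Real.log (Real.exp 1 + β) := by
    apply Real.log_pos; linarith
  have hγ0 : 0 ≤ γ := by
    apply div_nonneg hβ.le
    apply mul_nonneg (by linarith) hlc.le
  -- positivity of the log arguments
  have hLpos : ∀ t : ℝ, 0 < Real.log (Real.exp 1 + β + min |t| N) := by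
    intro t
    apply Real.log_pos
    have : (0:ℝ) ≤ min |t| N := le_min (abs_nonneg t) hN.le
    linarith
  -- u t = β * log log (e + β + min |t| N)
  set u : ℝ → ℝ := fun t => β * Real.log (Real.log (Real.exp 1 + β + min |t| N)) with hu
  have humono : ∀ s t : ℝ, min |s| N ≤ min |t| N → u s ≤ u t := by
    intro s t h
    apply mul_le_mul_of_nonneg_left _ hβ.le
    have hpos : (0:ℝ) < Real.exp 1 + β + min |s| N := by
      have h0 : (0:ℝ) ≤ min |s| N := le_min (abs_nonneg s) hN.le
      nlinarith [Real.exp_pos 1]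
    exact Real.log_le_log (hLpos s) (Real.log_le_log hpos (by linarith))
  -- the key Lipschitz-type bound
  have hkey : ∀ x y : ℝ, x ≤ y → u y - u x ≤ γ * (y - x) := by
    intro x y hxy
    rcases le_total y 0 with hy | hy
    · -- y ≤ 0 : |y| ≤ |x|, so u y ≤ u x
      have h1 : |y| ≤ |x| := by
        rw [abs_of_nonpos hy, abs_of_nonpos (hxy.trans hy)]
        linarith
      have h2 : u y ≤ u x := humono y x (min_le_min h1 le_rfl)
      have h3 : 0 ≤ γ * (y - x) := by nlinarith
      linarith
    · -- 0 ≤ y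
      set x' := max x 0 with hx'
      have hx'y : x' ≤ y := max_le hxy hy
      have hx'0 : 0 ≤ x' := le_max_right x 0
      have hx'abs : x' ≤ |x| := max_le (le_abs_self x) (abs_nonneg x)
      have hux' : u x' ≤ u x := by
        apply humono
        apply min_le_min _ le_rfl
        rw [abs_of_nonneg hx'0]
        exact hx'abs
      set a := min x' N with ha
      set b := min y N with hb
      have ha0 : 0 ≤ a := le_min hx'0 hN.le
      have hab : a ≤ b := min_le_min hx'y le_rfl
      have hba : b - a ≤ y - x' := by
        simp only [ha, hb, min_def]
        split_ifs <;> linarith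
      have hkey' := log_log_key β hβ ha0 hab
      have huy : u y = β * Real.log (Real.log (Real.exp 1 + β + b)) := by
        simp only [hu, hb, abs_of_nonneg hy]
      have hux'' : u x' = β * Real.log (Real.log (Real.exp 1 + β + a)) := by
        simp only [hu, ha, abs_of_nonneg hx'0]
      have h4 : u y - u x' ≤ γ * (b - a) := by
        rw [huy, hux'']
        exact hkey'
      have h5 : γ * (b - a) ≤ γ * (y - x') := by nlinarith
      have h6 : γ * (y - x') ≤ γ * (y - x) := by
        have : y - x' ≤ y - x := by
          have : x ≤ x' := le_max_left x 0
          linarith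
        nlinarith
      linarith
  -- rewrite the function as an exponential
  have hfun : ∀ t : ℝ, psiWeight β N t * Real.exp (-γ * t) =
      Real.exp (u t - γ * t) := by
    intro t
    rw [psiWeight_eq_min, Real.rpow_def_of_pos (hLpos t), ← Real.exp_add]
    congr 1
    simp only [hu]
    ring
  have hfun2 : ∀ t : ℝ, psiWeight β N t * Real.exp (γ * t) =
      Real.exp (u t + γ * t) := by
    intro t
    rw [psiWeight_eq_min, Real.rpow_def_of_pos (hLpos t), ← Real.exp_add]
    congr 1
    simp only [hu]
    ring
  constructor
  · intro x y hxy
    simp only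
    rw [hfun x, hfun y]
    apply Real.exp_le_exp.mpr
    have := hkey x y hxy
    linarith
  · intro x y hxy
    simp only
    rw [hfun2 x, hfun2 y]
    apply Real.exp_le_exp.mpr
    have h1 : u y - u x ≤ γ * (y - x) := hkey x y hxy
    -- need: u x + γ x ≤ u y + γ y, i.e. u x - u y ≤ γ (y - x)
    have h2 : u x - u y ≤ γ * (y - x) := by
      have := hkey (-y) (-x) (by linarith)
      have hux : u (-x) = u x := by simp [hu, abs_neg]
      have huy : u (-y) = u y := by simp [hu, abs_neg]
      rw [hux, huy] at this
      linarith
    linarith
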